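/- Let G be a graph, f an edge of G, and x ∈ ℤ^{E(G)} such that x(C') is even for every circuit C' of G avoiding f. If there exists a circuit C of G containing f with x(C) even, then x(C') is even for every circuit C' of G, i.e., x lies in the lattice generated by the cuts of G. -/

import Mathlib

open scoped Classical

open SimpleGraph Walk

section Aux

variable {V : Type*} {G : SimpleGraph V}

noncomputable def par (x : Sym2 V → ℤ) {u v : V} (w : G.Walk u v) : ZMod 2 :=
  (w.edges.map fun e => ((x e : ℤ) : ZMod 2)).sum

lemma par_nil (x : Sym2 V → ℤ) {u : V} : par x (Walk.nil : G.Walk u u) = 0 := rfl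

lemma par_cons (x : Sym2 V → ℤ) {u v w : V} (h : G.Adj u v) (p : G.Walk v w) :
    par x (Walk.cons h p) = ((x s(u, v) : ℤ) : ZMod 2) + par x p := by
  simp [par]

lemma par_append (x : Sym2 V → ℤ) {u v w : V} (p : G.Walk u v) (q : G.Walk v w) :
    par x (p.append q) = par x p + par x q := by
  simp [par, Walk.edges_append]

lemma par_reverse (x : Sym2 V → ℤ) {u v : V} (p : G.Walk u v) :
    par x p.reverse = par x p := by
  simp [par, Walk.edges_reverse, List.sum_reverse]

lemma par_eq_of_perm (x : Sym2 V → ℤ) {u v u' v' : V} {p : G.Walk u v} {q : G.Walk u' v'}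
    (h : List.Perm p.edges q.edges) : par x p = par x q :=
  List.Perm.sum_eq (h.map _)

lemma par_eq_zero_iff (x : Sym2 V → ℤ) {u v : V} {w : G.Walk u v} (hw : w.edges.Nodup) :
    par x w = 0 ↔ Even (∑ e ∈ w.edges.toFinset, x e) := by
  have h1 : ((∑ e ∈ w.edges.toFinset, x e : ℤ) : ZMod 2) = par x w := by
    rw [List.sum_toFinset _ hw, Int.cast_list_sum, List.map_map]
    rfl
  rw [← h1, ZMod.intCast_zmod_eq_zero_iff_dvd, even_iff_two_dvd]
  norm_num

lemma first_edge {a b c : V} (q : G.Walk a c) (hq : q.IsPath) (hb : s(a, b) ∈ q.edges) :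
    ∃ (h : G.Adj a b) (q' : G.Walk b c), q = Walk.cons h q' := by
  cases q with
  | nil => simp at hb
  | @cons _ d _ h' q'' =>
    rw [Walk.edges_cons, List.mem_cons] at hb
    rcases hb with hb | hb
    · obtain rfl : b = d := Sym2.congr_right.mp hb
      exact ⟨h', q'', rfl⟩
    · exact absurd (q''.fst_mem_support_of_mem_edges hb)
        ((Walk.cons_isPath_iff _ _).mp hq).2

lemma zmod2_add_self : ∀ z : ZMod 2, z + z = 0 := by decide

lemma closed_par_zero [DecidableEq V] (x : Sym2 V → ℤ) (f : Sym2 V)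
    (hcyc : ∀ (u : V) (w : G.Walk u u), w.IsCycle → f ∉ w.edges → par x w = 0) :
    ∀ (n : ℕ) (u : V) (w : G.Walk u u), w.length ≤ n → f ∉ w.edges → par x w = 0 := by
  intro n
  induction n with
  | zero =>
    intro u w hl _
    cases w with
    | nil => rfl
    | cons h p => simp [Walk.length_cons] at hl
  | succ n ih =>
    intro u w hl hf
    cases w with
    | nil => rfl
    | @cons _ v _ h p =>
      have hu : u ∈ p.support := p.end_mem_support
      set q := p.takeUntil u hu with hqdef
      set r := p.dropUntil u hu with hrdef
      have hspec : q.append r = p := p.take_spec hu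
      have hlenqr : q.length + r.length = p.length := by
        rw [← hspec, Walk.length_append]
      have hlp : p.length ≤ n := by
        simpa [Walk.length_cons] using hl
      have hfhead : f ≠ s(u, v) := by
        intro hh; exact hf (by simp [Walk.edges_cons, hh])
      have hfp : f ∉ p.edges := fun hh => hf (by simp [Walk.edges_cons, hh])
      have hfq : f ∉ q.edges := fun hh => hfp (Walk.edges_takeUntil_subset _ _ hh)
      have hfr : f ∉ r.edges := fun hh => hfp (Walk.edges_dropUntil_subset _ _ hh)
      have hr0 : par x r = 0 := ih u r (by omega) hfr
      have hsplit : par x (Walk.cons h p) = par x (Walk.cons h q) + par x r := by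
        rw [par_cons, par_cons, ← hspec, par_append]
        ring
      rw [hsplit, hr0, add_zero]
      -- now kill the closed walk `cons h q`, in which `u` occurs only at the ends
      have hcq : f ∉ (Walk.cons h q).edges := by
        simp only [Walk.edges_cons, List.mem_cons, not_or]
        exact ⟨hfhead, hfq⟩
      have hlq : q.length ≤ p.length := p.length_takeUntil_le hu
      by_cases hnd : q.support.Nodup
      · have hqpath : q.IsPath := Walk.IsPath.mk' hnd
        by_cases he : s(u, v) ∈ q.edges
        · -- degenerate: q is the single edge from v back to u
          obtain ⟨h2, q2, hq2⟩ := first_edge q.reverse hqpath.reverse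
            (by simpa [Walk.edges_reverse] using he)
          have hq2path : q2.IsPath := by
            have := hq2 ▸ hqpath.reverse
            exact ((Walk.cons_isPath_iff _ _).mp this).1
          have hq2nil : q2 = Walk.nil := Walk.isPath_iff_eq_nil.mp hq2path
          have hqeq : q = (Walk.cons h2 Walk.nil).reverse := by
            rw [← hq2nil, ← hq2, Walk.reverse_reverse]
          rw [par_cons, hqeq, par_reverse, par_cons, par_nil, add_zero]
          exact zmod2_add_self _
        · -- genuine cycle avoiding f
          have hc : (Walk.cons h q).IsCycle := (Walk.cons_isCycle_iff q h).mpr ⟨hqpath, he⟩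
          exact hcyc u _ hc hcq
      · -- duplicate internal vertex: rotate and split into two strictly shorter closed walks
        obtain ⟨a, ha⟩ := List.exists_duplicate_iff_not_nodup.mpr hnd
        have ha2 : 2 ≤ q.support.count a := List.duplicate_iff_two_le_count.mp ha
        have hamem : a ∈ (Walk.cons h q).support := by
          simp only [Walk.support_cons, List.mem_cons]
          exact Or.inr ha.mem
        set c' := (Walk.cons h q).rotate _ hamem with hc'def
        have hperm : List.Perm c'.edges (Walk.cons h q).edges :=
          (Walk.rotate_edges _ _ hamem).perm
        have hparc' : par x c' = par x (Walk.cons h q) := par_eq_of_perm x hperm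
        have hfc' : f ∉ c'.edges := fun hh => hcq (hperm.mem_iff.mp hh)
        have hlenc' : c'.length = (Walk.cons h q).length := by
          simp only [hc'def, Walk.rotate, Walk.length_append]
          rw [add_comm, ← Walk.length_append, Walk.take_spec]
        have hcount : 2 ≤ c'.support.tail.count a := by
          have := (Walk.support_rotate (Walk.cons h q) _ hamem).perm.count_eq a
          rw [this]
          simpa [Walk.support_cons] using ha2
        have hnotnil : ¬ c'.Nil := by
          rw [Walk.not_nil_iff_lt_length, hlenc', Walk.length_cons]
          omega
        obtain ⟨b', hb', p2, hp2⟩ := Walk.not_nil_iff.mp hnotnil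
        have hcount2 : 2 ≤ p2.support.count a := by
          have : c'.support.tail = p2.support := by rw [hp2, Walk.support_cons]; rfl
          rwa [this] at hcount
        have hap2 : a ∈ p2.support := by
          have : 0 < p2.support.count a := by omega
          exact List.count_pos_iff.mp this
        set t := p2.takeUntil a hap2 with htdef
        set r2 := p2.dropUntil a hap2 with hr2def
        have hspec2 : t.append r2 = p2 := p2.take_spec hap2
        have hlen2 : t.length + r2.length = p2.length := by
          rw [← hspec2, Walk.length_append]
        have hcountt : t.support.count a = 1 := p2.count_support_takeUntil_eq_one hap2
        have hr2pos : 1 ≤ r2.length := by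
          by_contra hcon
          have hr2nil : r2.length = 0 := by omega
          have : r2.support.tail = [] := by
            have hsl : r2.support.length = r2.length + 1 := (Walk.length_support r2)
            have : r2.support.tail.length = 0 := by
              rw [List.length_tail, hsl, hr2nil]
            exact List.length_eq_zero_iff.mp this
          have hcnt : p2.support.count a = t.support.count a + r2.support.tail.count a := by
            rw [← hspec2, Walk.support_append, List.count_append]
          rw [this] at hcnt
          simp [hcountt] at hcnt
          omega
        have hlenp2 : p2.length ≤ n := by
          have h5 : c'.length = p2.length + 1 := by rw [hp2, Walk.length_cons]
          have h6 : (Walk.cons h q).length = q.length + 1 := Walk.length_cons _ _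
          omega
        have hfp2 : f ∉ p2.edges := fun hh => hfc' (by rw [hp2]; simp [Walk.edges_cons, hh])
        have hfhead2 : f ≠ s(a, b') := by
          intro hh; exact hfc' (by rw [hp2]; simp [Walk.edges_cons, hh])
        have hft : f ∉ t.edges := fun hh => hfp2 (Walk.edges_takeUntil_subset _ _ hh)
        have hfr2 : f ∉ r2.edges := fun hh => hfp2 (Walk.edges_dropUntil_subset _ _ hh)
        have h1 : par x (Walk.cons hb' t) = 0 := by
          refine ih a (Walk.cons hb' t) ?_ ?_
          · rw [Walk.length_cons]; omega
          · simp only [Walk.edges_cons, List.mem_cons, not_or]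
            exact ⟨hfhead2, hft⟩
        have h2 : par x r2 = 0 := ih a r2 (by omega) hfr2
        have : par x c' = par x (Walk.cons hb' t) + par x r2 := by
          rw [hp2, par_cons, par_cons, ← hspec2, par_append]
          ring
        rw [← hparc', this, h1, h2, add_zero]

lemma cycle_through_decomp [DecidableEq V] (x : Sym2 V → ℤ) {a b u : V} (w : G.Walk u u)
    (hw : w.IsCycle) (hfw : s(a, b) ∈ w.edges) :
    ∃ (p : G.Walk b a), s(a, b) ∉ p.edges ∧
      par x w = ((x s(a, b) : ℤ) : ZMod 2) + par x p := by
  have ha : a ∈ w.support := w.fst_mem_support_of_mem_edges hfw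
  set w' := w.rotate _ ha with hw'def
  have hperm : List.Perm w'.edges w.edges := (w.rotate_edges _ ha).perm
  have hpar : par x w' = par x w := par_eq_of_perm x hperm
  have hcyc' : w'.IsCycle := hw.rotate ha
  have hf' : s(a, b) ∈ w'.edges := hperm.mem_iff.mpr hfw
  obtain ⟨c, hac, p2, hp2⟩ := Walk.not_nil_iff.mp hcyc'.not_nil
  have hcons : (Walk.cons hac p2).IsCycle := hp2 ▸ hcyc'
  obtain ⟨hp2path, hnotin⟩ := (Walk.cons_isCycle_iff p2 hac).mp hcons
  rw [hp2] at hf' hpar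
  by_cases hbc : b = c
  · subst hbc
    refine ⟨p2, hnotin, ?_⟩
    rw [← hpar, par_cons]
  · have hfp2 : s(a, b) ∈ p2.edges := by
      rw [Walk.edges_cons, List.mem_cons] at hf'
      rcases hf' with hh | hh
      · exact absurd (Sym2.congr_right.mp hh) hbc
      · exact hh
    obtain ⟨hab, q3, hq3⟩ := first_edge p2.reverse hp2path.reverse
      (by simpa [Walk.edges_reverse] using hfp2)
    have hrevpath : (Walk.cons hab q3).IsPath := hq3 ▸ hp2path.reverse
    obtain ⟨hq3path, hanotin⟩ := (Walk.cons_isPath_iff _ _).mp hrevpath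
    refine ⟨q3.append (Walk.cons hac.symm Walk.nil), ?_, ?_⟩
    · simp only [Walk.edges_append, Walk.edges_cons, Walk.edges_nil, List.mem_append,
        List.mem_cons, List.not_mem_nil, or_false, not_or]
      constructor
      · intro hh
        exact hanotin (q3.fst_mem_support_of_mem_edges hh)
      · intro hh
        rw [show s(c, a) = s(a, c) from Sym2.eq_swap] at hh
        exact hbc (Sym2.congr_right.mp hh)
    · have hparp2 : par x p2 = ((x s(a, b) : ℤ) : ZMod 2) + par x q3 := by
        rw [← par_reverse x p2, hq3, par_cons]
      rw [← hpar, par_cons, hparp2, par_append, par_cons, par_nil, add_zero,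
        show s(c, a) = s(a, c) from Sym2.eq_swap]
      ring

end Aux

/-- Let `G` be a simple graph, `f` an edge of `G`, and `x` an integer
edge-weighting such that `x(C')` is even for every circuit `C'` of `G` avoiding `f`.
If some circuit `C` of `G` contains `f` and has `x(C)` even, then `x(C')` is even for
every circuit `C'` of `G` (equivalently, `x` lies in the lattice generated by the
cuts of `G`). -/
theorem even_on_all_circuits {V : Type*} [Fintype V] (G : SimpleGraph V)
    (f : Sym2 V) (hf : f ∈ G.edgeSet) (x : Sym2 V → ℤ)
    (havoid : ∀ (u : V) (w : G.Walk u u), w.IsCycle → f ∉ w.edges →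
      Even (∑ e ∈ w.edges.toFinset, x e))
    (hthrough : ∃ (u : V) (w : G.Walk u u), w.IsCycle ∧ f ∈ w.edges ∧
      Even (∑ e ∈ w.edges.toFinset, x e)) :
    ∀ (u : V) (w : G.Walk u u), w.IsCycle → Even (∑ e ∈ w.edges.toFinset, x e) := by
  classical
  intro u w hw
  by_cases hfw : f ∈ w.edges
  · obtain ⟨u0, C, hC, hfC, hCeven⟩ := hthrough
    -- parity form of the hypotheses
    have hcyc : ∀ (u' : V) (w' : G.Walk u' u'), w'.IsCycle → f ∉ w'.edges → par x w' = 0 :=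
      fun u' w' hw' hf' =>
        (par_eq_zero_iff x hw'.isTrail.edges_nodup).mpr (havoid u' w' hw' hf')
    have hclosed : ∀ (v0 : V) (z : G.Walk v0 v0), f ∉ z.edges → par x z = 0 :=
      fun v0 z hz => closed_par_zero x f hcyc z.length v0 z le_rfl hz
    -- write f = s(a, b)
    induction f using Sym2.ind with
    | _ a b =>
    -- decompose both cycles through f
    obtain ⟨p1, hp1f, hp1⟩ := cycle_through_decomp x w hw hfw
    obtain ⟨p2, hp2f, hp2⟩ := cycle_through_decomp x C hC hfC
    have hC0 : par x C = 0 :=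
      (par_eq_zero_iff x hC.isTrail.edges_nodup).mpr hCeven
    -- the two paths have equal parity
    have hzz : par x p1 + par x p2 = 0 := by
      have hz : s(a, b) ∉ (p1.append p2.reverse).edges := by
        simp only [Walk.edges_append, Walk.edges_reverse, List.mem_append, List.mem_reverse,
          not_or]
        exact ⟨hp1f, hp2f⟩
      have := hclosed b (p1.append p2.reverse) hz
      rwa [par_append, par_reverse] at this
    have hpeq : par x p1 = par x p2 := by
      have key : ∀ s t : ZMod 2, s + t = 0 → s = t := by decide
      exact key _ _ hzz
    rw [← par_eq_zero_iff x hw.isTrail.edges_nodup, hp1, hpeq, ← hp2, hC0]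
  · exact havoid u w hw hfw
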